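/- For every real z with 0 ≤ z < 1 such that ∑_{n=0}^∞ π_n z^n < ∞, the generating function Π(z) = ∑_{n=0}^∞ π_n z^n satisfies Π(z)·(z − S*(λ−λz)) = π₀·(V*(λ−λz) − 1)·S*(λ−λz)/(1−ν₀). -/

import Mathlib

open MeasureTheory Filter Set Topology Asymptotics
open scoped ENNReal

noncomputable section

/-- Laplace-transform value `F*(λ − λz) = ∫ e^{−(λ−λz)t} dF(t)` (Bochner integral). -/
def qLap (μ : Measure ℝ) (lam z : ℝ) : ℝ := ∫ t, Real.exp (-(lam - lam * z) * t) ∂μ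

/-- Derivative value `F*'(λ − λz) = ∫ λ t e^{−(λ−λz)t} dF(t)`. -/
def qLapD (μ : Measure ℝ) (lam z : ℝ) : ℝ := ∫ t, lam * t * Real.exp (-(lam - lam * z) * t) ∂μ

/-- Laplace-transform value as a lower integral in `ℝ≥0∞` (possibly `+∞`). -/
def qLapE (μ : Measure ℝ) (lam z : ℝ) : ℝ≥0∞ :=
  ∫⁻ t, ENNReal.ofReal (Real.exp (-(lam - lam * z) * t)) ∂μ

/-- `R` is the leftmost (real) singular point of `z ↦ F*(λ − λz)`:
`∫ e^{λ(r−1)t} dF(t)` converges for `1 ≤ r < R` and diverges for `r > R`. -/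
def qAbscissa (μ : Measure ℝ) (lam R : ℝ) : Prop :=
  1 ≤ R ∧ (∀ r : ℝ, 1 ≤ r → r < R → Integrable (fun t => Real.exp (lam * (r - 1) * t)) μ) ∧
    (∀ r : ℝ, R < r → ¬ Integrable (fun t => Real.exp (lam * (r - 1) * t)) μ)

/-- `a_j` (resp. `ν_j`): probability that `j` Poisson(λ) arrivals occur during a
time distributed according to `μ`. -/
def qCoef (μ : Measure ℝ) (lam : ℝ) (j : ℕ) : ℝ :=
  ∫ t, (lam * t) ^ j / (Nat.factorial j : ℝ) * Real.exp (-lam * t) ∂μ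

/-- `b_j = ∑_{i=1}^{j+1} (ν_i / (1 − ν₀)) a_{j+1−i}`. -/
def qBcoef (μS μV : Measure ℝ) (lam : ℝ) (j : ℕ) : ℝ :=
  ∑ i ∈ Finset.Icc 1 (j + 1), qCoef μV lam i / (1 - qCoef μV lam 0) * qCoef μS lam (j + 1 - i)

/-- A positive measurable function is slowly varying at `+∞`. -/
def SlowlyVaryingAtTop (L : ℝ → ℝ) : Prop :=
  Measurable L ∧ (∀ x : ℝ, 0 < x → 0 < L x) ∧
    ∀ t : ℝ, 0 < t → Tendsto (fun x => L (t * x) / L x) atTop (nhds 1)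

lemma ae_nonneg_of_supp (μ : Measure ℝ) (h : μ (Set.Iio 0) = 0) : ∀ᵐ t ∂μ, 0 ≤ t := by
  rw [ae_iff]
  convert h using 2
  ext t
  simp [not_le]


lemma qCoef_nonneg (μ : Measure ℝ) (hsupp : μ (Set.Iio 0) = 0)
    (lam : ℝ) (hlam : 0 < lam) (j : ℕ) : 0 ≤ qCoef μ lam j := by
  refine integral_nonneg_of_ae ?_
  filter_upwards [ae_nonneg_of_supp μ hsupp] with t ht
  have : 0 ≤ lam * t := by positivity
  positivity


lemma qCoef_zero_lt_one (μ : Measure ℝ) [IsProbabilityMeasure μ] (hsupp : μ (Set.Iio 0) = 0)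
    (lam : ℝ) (hlam : 0 < lam) (hpos : 0 < μ (Set.Ioi 0)) : qCoef μ lam 0 < 1 := by
  have hae := ae_nonneg_of_supp μ hsupp
  have h0 : qCoef μ lam 0 = ∫ t, Real.exp (-lam * t) ∂μ := by
    unfold qCoef; norm_num
  have hmeas : Measurable fun t : ℝ => Real.exp (-lam * t) := (measurable_id.const_mul _).exp
  have hint : Integrable (fun t => Real.exp (-lam * t)) μ := by
    apply Integrable.mono' (integrable_const 1) hmeas.aestronglyMeasurable
    filter_upwards [hae] with t ht
    rw [Real.norm_of_nonneg (Real.exp_pos _).le, Real.exp_le_one_iff]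
    nlinarith
  have hsub : (1 : ℝ) - qCoef μ lam 0 = ∫ t, (1 - Real.exp (-lam * t)) ∂μ := by
    rw [integral_sub (integrable_const 1) hint, integral_const]
    simp [h0]
  have hnn : 0 ≤ᵐ[μ] fun t => 1 - Real.exp (-lam * t) := by
    filter_upwards [hae] with t ht
    have : Real.exp (-lam * t) ≤ 1 := by rw [Real.exp_le_one_iff]; nlinarith
    show (0:ℝ) ≤ 1 - Real.exp (-lam * t)
    linarith
  have hpos' : 0 < ∫ t, (1 - Real.exp (-lam * t)) ∂μ := by
    rw [integral_pos_iff_support_of_nonneg_ae hnn ((integrable_const 1).sub hint)]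
    refine lt_of_lt_of_le hpos (measure_mono ?_)
    intro t ht
    simp only [Function.mem_support]
    have h1 : Real.exp (-lam * t) < 1 := by
      rw [Real.exp_lt_one_iff]
      have : (0:ℝ) < t := ht
      nlinarith
    intro hc
    nlinarith
  rw [← hsub] at hpos'
  linarith


lemma hasSum_qCoef (μ : Measure ℝ) [IsProbabilityMeasure μ] (hsupp : μ (Set.Iio 0) = 0)
    (lam : ℝ) (hlam : 0 < lam) (z : ℝ) (h0 : 0 ≤ z) (h1 : z ≤ 1) :
    HasSum (fun j => qCoef μ lam j * z ^ j) (qLap μ lam z) := by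
  have hae : ∀ᵐ t ∂μ, 0 ≤ t := ae_nonneg_of_supp μ hsupp
  set g : ℕ → ℝ → ℝ := fun j t => (lam * t * z) ^ j / (Nat.factorial j : ℝ) * Real.exp (-lam * t)
    with hg
  have hcoef : ∀ j, qCoef μ lam j * z ^ j = ∫ t, g j t ∂μ := by
    intro j
    rw [qCoef, ← integral_mul_const]
    congr 1; funext t
    simp only [hg, mul_pow]
    ring
  have hgmeas : ∀ j, Measurable (g j) := by
    intro j
    exact ((((measurable_const.mul measurable_id).mul_const z).pow_const j).div_const _).mul
      ((measurable_id.const_mul (-lam)).exp)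
  have hgnn : ∀ j, 0 ≤ᵐ[μ] g j := by
    intro j
    filter_upwards [hae] with t ht
    have : 0 ≤ lam * t * z := by positivity
    positivity
  have hgle : ∀ j, ∀ᵐ t ∂μ, ‖g j t‖ ≤ 1 := by
    intro j
    filter_upwards [hae] with t ht
    have hnn : 0 ≤ lam * t * z := by positivity
    have h2 : g j t ≤ Real.exp (lam * t * z) * Real.exp (-lam * t) := by
      apply mul_le_mul_of_nonneg_right (Real.pow_div_factorial_le_exp (lam*t*z) hnn j) (Real.exp_pos _).le
    rw [← Real.exp_add] at h2
    have h3 : Real.exp (lam * t * z + -lam * t) ≤ 1 := by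
      rw [Real.exp_le_one_iff]
      nlinarith [mul_nonneg (mul_nonneg hlam.le ht) (sub_nonneg.2 h1)]
    have h4 : 0 ≤ g j t := by
      have : 0 ≤ lam * t * z := hnn
      positivity
    rw [Real.norm_of_nonneg h4]
    linarith
  have hgint : ∀ j, Integrable (g j) μ :=
    fun j => Integrable.mono' (integrable_const 1) (hgmeas j).aestronglyMeasurable (hgle j)
  have hcoefnn : ∀ j, 0 ≤ qCoef μ lam j * z ^ j := by
    intro j; rw [hcoef j]; exact integral_nonneg_of_ae (hgnn j)
  -- the exponential integrand
  set E : ℝ → ℝ := fun t => Real.exp (-(lam - lam * z) * t) with hE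
  have hEmeas : Measurable E := (measurable_id.const_mul _).exp
  have hEle : ∀ᵐ t ∂μ, ‖E t‖ ≤ 1 := by
    filter_upwards [hae] with t ht
    rw [Real.norm_of_nonneg (Real.exp_pos _).le, Real.exp_le_one_iff]
    nlinarith [mul_nonneg (mul_nonneg hlam.le ht) (sub_nonneg.2 h1)]
  have hEint : Integrable E μ := Integrable.mono' (integrable_const 1)
    hEmeas.aestronglyMeasurable hEle
  have hEnn : 0 ≤ᵐ[μ] E := Eventually.of_forall fun t => (Real.exp_pos _).le
  -- ENNReal computation
  have h1' : ∀ j, ENNReal.ofReal (qCoef μ lam j * z ^ j) = ∫⁻ t, ENNReal.ofReal (g j t) ∂μ := by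
    intro j; rw [hcoef j]; exact ofReal_integral_eq_lintegral_ofReal (hgint j) (hgnn j)
  have h2' : ∑' j, ∫⁻ t, ENNReal.ofReal (g j t) ∂μ = ∫⁻ t, ∑' j, ENNReal.ofReal (g j t) ∂μ :=
    (lintegral_tsum fun j => ((hgmeas j).ennreal_ofReal).aemeasurable).symm
  have h3' : ∀ᵐ t ∂μ, (∑' j, ENNReal.ofReal (g j t)) = ENNReal.ofReal (E t) := by
    filter_upwards [hae] with t ht
    have hnn : ∀ j, 0 ≤ g j t := by
      intro j
      have : 0 ≤ lam * t * z := by positivity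
      positivity
    have hsm : Summable fun j => g j t :=
      (Real.summable_pow_div_factorial (lam * t * z)).mul_right _
    rw [← ENNReal.ofReal_tsum_of_nonneg hnn hsm]
    congr 1
    have := NormedSpace.expSeries_div_hasSum_exp (𝔸 := ℝ) (lam * t * z)
    rw [hg]
    simp only
    rw [tsum_mul_right, this.tsum_eq, ← Real.exp_eq_exp_ℝ, ← Real.exp_add]
    congr 1; ring
  have key : ∑' j, ENNReal.ofReal (qCoef μ lam j * z ^ j) = ENNReal.ofReal (qLap μ lam z) := by
    rw [show qLap μ lam z = ∫ t, E t ∂μ from rfl,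
      ofReal_integral_eq_lintegral_ofReal hEint hEnn, ← lintegral_congr_ae h3', ← h2']
    exact tsum_congr h1'
  have hfin : ∑' j, ENNReal.ofReal (qCoef μ lam j * z ^ j) ≠ ⊤ := by
    rw [key]; exact ENNReal.ofReal_ne_top
  have hsum : Summable fun j => qCoef μ lam j * z ^ j := by
    have := ENNReal.summable_toReal hfin
    simpa [ENNReal.toReal_ofReal, hcoefnn] using this
  refine (Summable.hasSum_iff hsum).2 ?_
  have heq : ENNReal.ofReal (∑' j, qCoef μ lam j * z ^ j) = ENNReal.ofReal (qLap μ lam z) := by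
    rw [ENNReal.ofReal_tsum_of_nonneg hcoefnn hsum, key]
  have hqlapnn : 0 ≤ qLap μ lam z := integral_nonneg fun t => (Real.exp_pos _).le
  exact (ENNReal.ofReal_eq_ofReal_iff (tsum_nonneg hcoefnn) hqlapnn).1 heq


set_option maxHeartbeats 2000000 in
theorem stmt4
    (μS μV : Measure ℝ) [IsProbabilityMeasure μS] [IsProbabilityMeasure μV]
    (hSsupp : μS (Set.Iio 0) = 0) (hVsupp : μV (Set.Iio 0) = 0)
    (lam : ℝ) (hlam : 0 < lam)
    (hSint : Integrable (fun t => t) μS) (hVint : Integrable (fun t => t) μV)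
    (ES EV : ℝ) (hES : ES = ∫ t, t ∂μS) (hEV : EV = ∫ t, t ∂μV)
    (hESpos : 0 < ES) (hEVpos : 0 < EV) (hVpos : 0 < μV (Set.Ioi 0))
    (ρ : ℝ) (hρdef : ρ = lam * ES)
    (π : ℕ → ℝ) (hπnn : ∀ n, 0 ≤ π n) (hπne : π ≠ 0)
    (hinv : ∀ j : ℕ, π j = π 0 * qBcoef μS μV lam j +
      ∑ k ∈ Finset.Icc 1 (j + 1), π k * qCoef μS lam (j + 1 - k))
    :
    ∀ z : ℝ, 0 ≤ z → z < 1 → Summable (fun n : ℕ => π n * z ^ n) →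
      (∑' n : ℕ, π n * z ^ n) * (z - qLap μS lam z) =
        π 0 * (qLap μV lam z - 1) * qLap μS lam z / (1 - qCoef μV lam 0) := by
  intro z hz0 hz1 hsumπ
  have hA := hasSum_qCoef μS hSsupp lam hlam z hz0 hz1.le
  have hVt := hasSum_qCoef μV hVsupp lam hlam z hz0 hz1.le
  set A := qLap μS lam z with hAdef
  set Vt := qLap μV lam z with hVtdef
  set ν0 := qCoef μV lam 0 with hν0def
  have hν0 : ν0 < 1 := qCoef_zero_lt_one μV hVsupp lam hlam hVpos
  have hne : (1 : ℝ) - ν0 ≠ 0 := by linarith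
  set P := ∑' n : ℕ, π n * z ^ n with hP
  set f : ℕ → ℝ := fun k => π (k + 1) * z ^ (k + 1) with hf
  set g : ℕ → ℝ := fun m => qCoef μS lam m * z ^ m with hg
  set fV : ℕ → ℝ := fun i => qCoef μV lam (i + 1) * z ^ (i + 1) / (1 - ν0) with hfV
  have hfsum : Summable f := (summable_nat_add_iff 1).2 hsumπ
  have hgsum : Summable g := hA.summable
  have haVsum : Summable (fun n => qCoef μV lam n * z ^ n) := hVt.summable
  have hfVsum : Summable fV := ((summable_nat_add_iff 1).2 haVsum).div_const _
  have hfnn : ∀ k, 0 ≤ f k := fun k => mul_nonneg (hπnn _) (pow_nonneg hz0 _)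
  have hgnn : ∀ m, 0 ≤ g m :=
    fun m => mul_nonneg (qCoef_nonneg μS hSsupp lam hlam m) (pow_nonneg hz0 m)
  have hfVnn : ∀ i, 0 ≤ fV i := fun i => div_nonneg
    (mul_nonneg (qCoef_nonneg μV hVsupp lam hlam _) (pow_nonneg hz0 _)) (by linarith)
  have hfn : Summable fun k => ‖f k‖ := by
    have he : (fun k => ‖f k‖) = f := funext fun k => Real.norm_of_nonneg (hfnn k)
    rw [he]; exact hfsum
  have hgn : Summable fun m => ‖g m‖ := by
    have he : (fun m => ‖g m‖) = g := funext fun m => Real.norm_of_nonneg (hgnn m)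
    rw [he]; exact hgsum
  have hfVn : Summable fun i => ‖fV i‖ := by
    have he : (fun i => ‖fV i‖) = fV := funext fun i => Real.norm_of_nonneg (hfVnn i)
    rw [he]; exact hfVsum
  -- tails
  have hCf : ∑' k, f k = P - π 0 := by
    have h := Summable.tsum_eq_zero_add hsumπ
    simp only [pow_zero, mul_one] at h
    have h2 : ∑' k, f k = ∑' b : ℕ, π (b + 1) * z ^ (b + 1) := rfl
    rw [h2]; rw [← hP] at h; linarith
  have hCV : ∑' i, fV i = (Vt - ν0) / (1 - ν0) := by
    have h := Summable.tsum_eq_zero_add haVsum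
    simp only [pow_zero, mul_one] at h
    rw [hVt.tsum_eq, ← hν0def] at h
    have h2 : ∑' i, fV i = (∑' b : ℕ, qCoef μV lam (b + 1) * z ^ (b + 1)) / (1 - ν0) :=
      tsum_div_const
    rw [h2]
    congr 1
    linarith
  -- reindexing the convolution sums
  have hT2 : ∀ j : ℕ, (∑ k ∈ Finset.Icc 1 (j + 1), π k * qCoef μS lam (j + 1 - k)) * z ^ (j + 1)
      = ∑ k ∈ Finset.range (j + 1), f k * g (j - k) := by
    intro j
    rw [← Finset.Ico_add_one_right_eq_Icc, Finset.sum_Ico_eq_sum_range]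
    simp only [Nat.succ_sub_one, Nat.add_sub_cancel]
    rw [Finset.sum_mul]
    apply Finset.sum_congr rfl
    intro i hi
    have hij : i ≤ j := by
      have := Finset.mem_range.1 hi; omega
    have h2 : j + 1 - (i + 1) = j - i := by omega
    have h3 : z ^ (j + 1) = z ^ (i + 1) * z ^ (j - i) := by
      rw [← pow_add]; congr 1; omega
    have h1 : (1 : ℕ) + i = i + 1 := by omega
    rw [h1, h2, h3, hf, hg]
    ring
  have hT1 : ∀ j : ℕ, qBcoef μS μV lam j * z ^ (j + 1)
      = ∑ k ∈ Finset.range (j + 1), fV k * g (j - k) := by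
    intro j
    rw [qBcoef, ← Finset.Ico_add_one_right_eq_Icc, Finset.sum_Ico_eq_sum_range]
    simp only [Nat.succ_sub_one, Nat.add_sub_cancel]
    rw [Finset.sum_mul]
    apply Finset.sum_congr rfl
    intro i hi
    have hij : i ≤ j := by
      have := Finset.mem_range.1 hi; omega
    have h2 : j + 1 - (i + 1) = j - i := by omega
    have h3 : z ^ (j + 1) = z ^ (i + 1) * z ^ (j - i) := by
      rw [← pow_add]; congr 1; omega
    have h1 : (1 : ℕ) + i = i + 1 := by omega
    rw [h1, h2, h3, hfV, hg, ← hν0def]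
    ring
  have hEq : ∀ j : ℕ, π j * z ^ (j + 1)
      = π 0 * (∑ k ∈ Finset.range (j + 1), fV k * g (j - k))
        + ∑ k ∈ Finset.range (j + 1), f k * g (j - k) := by
    intro j
    rw [← hT1 j, ← hT2 j]
    calc π j * z ^ (j + 1)
        = (π 0 * qBcoef μS μV lam j
            + ∑ k ∈ Finset.Icc 1 (j + 1), π k * qCoef μS lam (j + 1 - k)) * z ^ (j + 1) := by
          rw [← hinv j]
      _ = π 0 * (qBcoef μS μV lam j * z ^ (j + 1))
            + (∑ k ∈ Finset.Icc 1 (j + 1), π k * qCoef μS lam (j + 1 - k)) * z ^ (j + 1) := by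
          ring
  have hsum2 : Summable fun j => ∑ k ∈ Finset.range (j + 1), f k * g (j - k) :=
    (summable_norm_sum_mul_range_of_summable_norm hfn hgn).of_norm
  have hsum3 : Summable fun j => ∑ k ∈ Finset.range (j + 1), fV k * g (j - k) :=
    (summable_norm_sum_mul_range_of_summable_norm hfVn hgn).of_norm
  have hL : ∑' j : ℕ, π j * z ^ (j + 1) = P * z := by
    have he : (fun j : ℕ => π j * z ^ (j + 1)) = fun j : ℕ => (π j * z ^ j) * z := by
      funext j; rw [pow_succ]; ring
    rw [he, tsum_mul_right, ← hP]
  have key : P * z = π 0 * ((Vt - ν0) / (1 - ν0) * A) + (P - π 0) * A := by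
    have h := tsum_congr (L := SummationFilter.unconditional ℕ) hEq
    rw [hL, Summable.tsum_add (hsum3.mul_left (π 0)) hsum2, tsum_mul_left,
      ← tsum_mul_tsum_eq_tsum_sum_range_of_summable_norm hfVn hgn,
      ← tsum_mul_tsum_eq_tsum_sum_range_of_summable_norm hfn hgn,
      hCV, hCf, hA.tsum_eq] at h
    exact h
  rw [eq_div_iff hne]
  have hdiv : (Vt - ν0) / (1 - ν0) * (1 - ν0) = Vt - ν0 := div_mul_cancel₀ _ hne
  have e1 : P * z * (1 - ν0)
      = π 0 * A * ((Vt - ν0) / (1 - ν0) * (1 - ν0)) + (P - π 0) * A * (1 - ν0) := by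
    rw [key]; ring
  rw [hdiv] at e1
  linear_combination e1
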